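/- For every (x,y,z) ∈ ℝ³ with x² + y² ≤ -z and z < 0, the curve X(t) = (x·(z²+4t)^{1/4}/√(-z), y·(z²+4t)^{1/4}/√(-z), -√(z²+4t)) defined for t ≥ 0 satisfies X(0) = (x,y,z) and X'(t) = b(X(t)) for all t > 0, where b(u,v,w) = (u/w², v/w², 2/w) for w < 0 (i.e., b restricted to the lower paraboloid P⁻). -/

import Mathlib

open Real

lemma aux_coeff_deriv (c : ℝ) {s : ℝ} (hs : 0 < s) :
    HasDerivAt (fun t : ℝ => c * (t : ℝ) ^ ((1 : ℝ) / 4)) (c * s ^ ((1:ℝ)/4) / (4 * s)) s := by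
  have h := (Real.hasStrictDerivAt_rpow_const (p := (1:ℝ)/4) (Or.inl hs.ne')).hasDerivAt
  have h2 := h.const_mul c
  refine h2.congr_deriv (Eq.symm ?_)
  rw [Real.rpow_sub hs, Real.rpow_one]
  field_simp

lemma aux_main (c z : ℝ) (hz : z < 0) :
    ∀ t : ℝ, 0 < t →
      HasDerivAt (fun t : ℝ => c * (z ^ 2 + 4 * t) ^ ((1 : ℝ) / 4))
        ((c * (z ^ 2 + 4 * t) ^ ((1 : ℝ) / 4)) / (-Real.sqrt (z ^ 2 + 4 * t)) ^ 2) t := by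
  intro t ht
  have hs : 0 < z ^ 2 + 4 * t := by positivity
  have hg : HasDerivAt (fun t : ℝ => z ^ 2 + 4 * t) 4 t := by
    simpa using ((hasDerivAt_id t).const_mul 4).const_add (z ^ 2)
  have h := (aux_coeff_deriv c hs).comp t hg
  have hsq : (-Real.sqrt (z ^ 2 + 4 * t)) ^ 2 = z ^ 2 + 4 * t := by
    rw [neg_pow, Real.sq_sqrt hs.le]; ring
  rw [hsq]
  refine h.congr_deriv (Eq.symm ?_)
  field_simp

theorem flow_lower_paraboloid (x y z : ℝ) (hz : z < 0) (hP : x ^ 2 + y ^ 2 ≤ -z) :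
    (fun t : ℝ => (x / Real.sqrt (-z) * (z ^ 2 + 4 * t) ^ ((1 : ℝ) / 4),
        y / Real.sqrt (-z) * (z ^ 2 + 4 * t) ^ ((1 : ℝ) / 4),
        -Real.sqrt (z ^ 2 + 4 * t))) 0 = (x, y, z) ∧
    ∀ t : ℝ, 0 < t →
      HasDerivAt (fun t : ℝ => ((x / Real.sqrt (-z) * (z ^ 2 + 4 * t) ^ ((1 : ℝ) / 4),
          y / Real.sqrt (-z) * (z ^ 2 + 4 * t) ^ ((1 : ℝ) / 4),
          -Real.sqrt (z ^ 2 + 4 * t)) : ℝ × ℝ × ℝ))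
        (((x / Real.sqrt (-z) * (z ^ 2 + 4 * t) ^ ((1 : ℝ) / 4)) /
            (-Real.sqrt (z ^ 2 + 4 * t)) ^ 2,
          (y / Real.sqrt (-z) * (z ^ 2 + 4 * t) ^ ((1 : ℝ) / 4)) /
            (-Real.sqrt (z ^ 2 + 4 * t)) ^ 2,
          2 / (-Real.sqrt (z ^ 2 + 4 * t)))) t := by
  have hz' : (0:ℝ) < -z := by linarith
  constructor
  · have h1 : (z ^ 2 + 4 * (0:ℝ)) = (-z) ^ 2 := by ring
    have h2 : ((-z) ^ 2 : ℝ) ^ ((1:ℝ)/4) = Real.sqrt (-z) := by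
      rw [← Real.rpow_natCast (-z) 2, ← Real.rpow_mul hz'.le]
      norm_num
      exact (Real.sqrt_eq_rpow (-z)).symm
    have h3 : Real.sqrt ((-z)^2) = -z := by
      rw [Real.sqrt_sq hz'.le]
    simp only [h1, h2, h3]
    have hne : Real.sqrt (-z) ≠ 0 := (Real.sqrt_pos.mpr hz').ne'
    have hsq : Real.sqrt (-z) * Real.sqrt (-z) = -z := Real.mul_self_sqrt hz'.le
    refine Prod.ext ?_ (Prod.ext ?_ ?_) <;> simp <;> field_simp
  · intro t ht
    have hs : 0 < z ^ 2 + 4 * t := by positivity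
    have hg : HasDerivAt (fun t : ℝ => z ^ 2 + 4 * t) 4 t := by
      simpa using ((hasDerivAt_id t).const_mul 4).const_add (z ^ 2)
    have h3 : HasDerivAt (fun t : ℝ => -Real.sqrt (z ^ 2 + 4 * t))
        (2 / (-Real.sqrt (z ^ 2 + 4 * t))) t := by
      have := (hg.sqrt hs.ne').neg
      refine this.congr_deriv (Eq.symm ?_)
      have hne : Real.sqrt (z ^ 2 + 4 * t) ≠ 0 := (Real.sqrt_pos.mpr hs).ne'
      rw [div_neg, neg_inj]
      field_simp
      ring
    exact (aux_main (x / Real.sqrt (-z)) z hz t ht).prodMk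
      ((aux_main (y / Real.sqrt (-z)) z hz t ht).prodMk h3)
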